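/- Let 0 < Λ < 1, C > 0. For ε > 0 and x ∈ (ε, x₀) with x₀ < 1, suppose f(x, ε) = C·x^(Λ(ε)) + ε·(1 + ψ(x,ε)) where |Λ(ε) − Λ| ≤ M·ε and |ψ(x,ε)| ≤ 1/2 for small ε. Then there is k > 0 and ε₀ > 0 such that for all 0 < ε < ε₀ and all x ∈ (ε, x₀): (C − k·ε^(1−Λ))·x^Λ < f(x,ε) < (C + k·ε^(1−Λ))·x^Λ. -/

import Mathlib

open Real Filter Set Topology

set_option maxHeartbeats 1000000 in
theorem stmt_17 (Λ C M x₀ : ℝ) (hΛ0 : 0 < Λ) (hΛ1 : Λ < 1) (hC : 0 < C)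
    (hM : 0 < M) (hx₀0 : 0 < x₀) (hx₀1 : x₀ < 1)
    (Λfun : ℝ → ℝ) (ψ : ℝ → ℝ → ℝ) (f : ℝ → ℝ → ℝ)
    (hf : ∀ x ε : ℝ, f x ε = C * x ^ (Λfun ε) + ε * (1 + ψ x ε))
    (hΛfun : ∃ ε₁ > 0, ∀ ε : ℝ, 0 < ε → ε < ε₁ →
      |Λfun ε - Λ| ≤ M * ε ∧ ∀ x ∈ Set.Ioo ε x₀, |ψ x ε| ≤ 1/2) :
    ∃ k > 0, ∃ ε₀ > 0, ∀ ε : ℝ, 0 < ε → ε < ε₀ → ∀ x ∈ Set.Ioo ε x₀,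
      (C - k * ε ^ (1 - Λ)) * x ^ Λ < f x ε ∧
      f x ε < (C + k * ε ^ (1 - Λ)) * x ^ Λ := by
  obtain ⟨ε₁, hε₁, hyp⟩ := hΛfun
  refine ⟨2*C*M + 3/2 + 1, by positivity, ?_⟩
  have h1 : Tendsto (fun ε : ℝ => Real.log ε * ε ^ (1:ℝ)) (𝓝[>] 0) (𝓝 0) :=
    tendsto_log_mul_rpow_nhdsGT_zero one_pos
  have h2 : Tendsto (fun ε : ℝ => Real.log ε * ε ^ Λ) (𝓝[>] 0) (𝓝 0) :=
    tendsto_log_mul_rpow_nhdsGT_zero hΛ0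
  have hev : ∀ᶠ ε in 𝓝[>] (0:ℝ),
      |Real.log ε * ε ^ (1:ℝ)| ≤ 1/M ∧ |Real.log ε * ε ^ Λ| ≤ 1 ∧ ε < ε₁ := by
    have e1 : ∀ᶠ ε in 𝓝[>] (0:ℝ), |Real.log ε * ε ^ (1:ℝ)| ≤ 1/M := by
      have := h1.eventually (eventually_abs_sub_lt 0 (show (0:ℝ) < 1/M by positivity))
      filter_upwards [this] with ε h using by simpa using h.le
    have e2 : ∀ᶠ ε in 𝓝[>] (0:ℝ), |Real.log ε * ε ^ Λ| ≤ 1 := by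
      have := h2.eventually (eventually_abs_sub_lt 0 one_pos)
      filter_upwards [this] with ε h using by simpa using h.le
    have e3 : ∀ᶠ ε in 𝓝[>] (0:ℝ), ε < ε₁ :=
      eventually_nhdsWithin_of_eventually_nhds (Filter.Tendsto.eventually_lt_const hε₁ tendsto_id)
    filter_upwards [e1, e2, e3] with ε a b c using ⟨a, b, c⟩
  obtain ⟨u, hu, hsub⟩ := mem_nhdsGT_iff_exists_Ioo_subset.mp hev
  refine ⟨u, hu, ?_⟩
  intro ε hε0 hεu x hx
  obtain ⟨hcond1, hcond2, hεε₁⟩ := hsub ⟨hε0, hεu⟩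
  obtain ⟨hδ, hψall⟩ := hyp ε hε0 hεε₁
  obtain ⟨hεx, hxx₀⟩ := hx
  have hx0 : 0 < x := hε0.trans hεx
  have hx1 : x < 1 := hxx₀.trans hx₀1
  have hψ := hψall x ⟨hεx, hxx₀⟩
  set δ := Λfun ε - Λ with hδdef
  -- log bounds
  have hlogx : |Real.log x| ≤ |Real.log ε| := by
    have h1 : Real.log x < 0 := Real.log_neg hx0 hx1
    have h2 : Real.log ε ≤ Real.log x := Real.log_le_log hε0 hεx.le
    rw [abs_of_neg h1, abs_of_neg (lt_of_le_of_lt h2 h1)]; linarith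
  set t := Real.log x * δ with ht
  have habst : |t| ≤ M * ε * |Real.log ε| := by
    rw [ht, abs_mul]
    calc |Real.log x| * |δ| ≤ |Real.log ε| * (M * ε) :=
          mul_le_mul hlogx hδ (abs_nonneg _) (abs_nonneg _)
      _ = M * ε * |Real.log ε| := by ring
  have ht1 : |t| ≤ 1 := by
    have : M * ε * |Real.log ε| ≤ 1 := by
      rw [abs_mul, Real.rpow_one] at hcond1
      have : |Real.log ε| * ε ≤ 1/M := by
        rwa [abs_of_pos hε0] at hcond1
      calc M * ε * |Real.log ε| = M * (|Real.log ε| * ε) := by ring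
        _ ≤ M * (1/M) := by nlinarith
        _ = 1 := by field_simp
    linarith
  -- ε * |log ε| ≤ ε ^ (1-Λ)
  have hεsplit : ε = ε ^ (1-Λ) * ε ^ Λ := by
    rw [← Real.rpow_add hε0]; simp
  have hεlog : ε * |Real.log ε| ≤ ε ^ (1-Λ) := by
    have hd : |Real.log ε| * ε ^ Λ ≤ 1 := by rwa [abs_mul, abs_of_pos (Real.rpow_pos_of_pos hε0 Λ)] at hcond2
    calc ε * |Real.log ε| = ε ^ (1-Λ) * (|Real.log ε| * ε ^ Λ) := by
          nth_rewrite 1 [hεsplit]; ring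
      _ ≤ ε ^ (1-Λ) * 1 := by
          apply mul_le_mul_of_nonneg_left hd (Real.rpow_pos_of_pos hε0 _).le
      _ = ε ^ (1-Λ) := mul_one _
  -- x^δ estimate
  have hxd : x ^ δ = Real.exp t := by
    rw [Real.rpow_def_of_pos hx0]
  have hexp : |x ^ δ - 1| ≤ 2 * M * ε ^ (1-Λ) := by
    rw [hxd]
    calc |Real.exp t - 1| ≤ 2 * |t| := Real.abs_exp_sub_one_le ht1
      _ ≤ 2 * (M * ε * |Real.log ε|) := by linarith
      _ = 2 * M * (ε * |Real.log ε|) := by ring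
      _ ≤ 2 * M * ε ^ (1-Λ) := by nlinarith
  -- ε ≤ ε^(1-Λ) * x^Λ
  have hεle : ε ≤ ε ^ (1-Λ) * x ^ Λ := by
    nth_rewrite 1 [hεsplit]
    apply mul_le_mul_of_nonneg_left _ (Real.rpow_pos_of_pos hε0 _).le
    exact Real.rpow_le_rpow hε0.le hεx.le hΛ0.le
  -- decomposition
  have hsplit : x ^ (Λfun ε) = x ^ Λ * x ^ δ := by
    rw [← Real.rpow_add hx0, hδdef]; ring_nf
  have hxΛ : (0:ℝ) < x ^ Λ := Real.rpow_pos_of_pos hx0 Λ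
  have hεp : (0:ℝ) < ε ^ (1-Λ) := Real.rpow_pos_of_pos hε0 _
  have key : |f x ε - C * x ^ Λ| ≤ (2*C*M + 3/2) * (ε ^ (1-Λ) * x ^ Λ) := by
    rw [hf, hsplit]
    have : C * (x ^ Λ * x ^ δ) + ε * (1 + ψ x ε) - C * x ^ Λ
        = C * x ^ Λ * (x ^ δ - 1) + ε * (1 + ψ x ε) := by ring
    rw [this]
    calc |C * x ^ Λ * (x ^ δ - 1) + ε * (1 + ψ x ε)|
        ≤ |C * x ^ Λ * (x ^ δ - 1)| + |ε * (1 + ψ x ε)| := abs_add_le _ _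
      _ = C * x ^ Λ * |x ^ δ - 1| + ε * |1 + ψ x ε| := by
          rw [abs_mul, abs_mul, abs_mul, abs_of_pos hC, abs_of_pos hxΛ,
            abs_of_pos hε0]
      _ ≤ C * x ^ Λ * (2 * M * ε ^ (1-Λ)) + ε * (3/2) := by
          have h32 : |1 + ψ x ε| ≤ 3/2 := by
            calc |1 + ψ x ε| ≤ |(1:ℝ)| + |ψ x ε| := abs_add_le _ _
              _ ≤ 1 + 1/2 := by rw [abs_one]; linarith
              _ = 3/2 := by norm_num
          have := mul_le_mul_of_nonneg_left hexp (by positivity : (0:ℝ) ≤ C * x ^ Λ)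
          have := mul_le_mul_of_nonneg_left h32 hε0.le
          linarith
      _ ≤ (2*C*M + 3/2) * (ε ^ (1-Λ) * x ^ Λ) := by nlinarith
  have hklt : (2*C*M + 3/2) * (ε ^ (1-Λ) * x ^ Λ)
      < (2*C*M + 3/2 + 1) * (ε ^ (1-Λ) * x ^ Λ) := by nlinarith
  have habs := abs_le.mp key
  constructor
  · have heq : (C - (2*C*M + 3/2 + 1) * ε ^ (1-Λ)) * x ^ Λ
        = C * x ^ Λ - (2*C*M + 3/2 + 1) * (ε ^ (1-Λ) * x ^ Λ) := by ring
    rw [heq]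
    linarith [habs.1, hklt]
  · have heq : (C + (2*C*M + 3/2 + 1) * ε ^ (1-Λ)) * x ^ Λ
        = C * x ^ Λ + (2*C*M + 3/2 + 1) * (ε ^ (1-Λ) * x ^ Λ) := by ring
    rw [heq]
    linarith [habs.2, hklt]
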